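/- Let F be a field of characteristic zero and let A ∈ U₃(F) be an idempotent matrix (A² = A) of rank 2. Then there exists a map φ : U₃(F) → U₃(F) which is either an algebra automorphism of U₃(F) or an antiautomorphism of U₃(F) (an F-linear bijection with φ(XY) = φ(Y)φ(X) for all X, Y) such that φ(A) = e₁₁ + e₂₂ or φ(A) = e₁₁ + e₃₃. -/

import Mathlib

set_option synthInstance.maxHeartbeats 1000000
set_option maxHeartbeats 1000000

/-- The algebra of 3×3 upper-triangular matrices over `F`. -/
def UT3 (F : Type*) [Field F] : Subalgebra F (Matrix (Fin 3) (Fin 3) F) where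
  carrier := {M | ∀ i j : Fin 3, j < i → M i j = 0}
  mul_mem' := by
    intro A B hA hB i j hij
    show (A * B) i j = 0
    rw [Matrix.mul_apply]
    refine Finset.sum_eq_zero fun k _ => ?_
    rcases lt_or_ge k i with hk | hk
    · rw [hA i k hk, zero_mul]
    · rw [hB k j (lt_of_lt_of_le hij hk), mul_zero]
  one_mem' := by
    intro i j hij
    exact Matrix.one_apply_ne (fun h => absurd hij (by rw [h]; exact lt_irrefl j))
  add_mem' := by
    intro A B hA hB i j hij
    show A i j + B i j = 0
    rw [hA i j hij, hB i j hij, add_zero]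
  zero_mem' := fun i j _ => rfl
  algebraMap_mem' := by
    intro r i j hij
    show algebraMap F (Matrix (Fin 3) (Fin 3) F) r i j = 0
    rw [Matrix.algebraMap_eq_diagonal]
    exact Matrix.diagonal_apply_ne _ (fun h => absurd hij (by rw [h]; exact lt_irrefl j))

/-- The matrix unit `e_{ij}` as an element of `UT3 F`, for `i ≤ j`. -/
def eU {F : Type*} [Field F] (i j : Fin 3) (h : i ≤ j) : UT3 F :=
  ⟨Matrix.single i j 1, by
    intro a b hba
    by_cases hia : i = a
    · by_cases hjb : j = b
      · exact absurd hba (by rw [← hia, ← hjb]; exact not_lt.mpr h)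
      · exact Matrix.single_apply_of_ne _ _ _ _ _ (by tauto)
    · exact Matrix.single_apply_of_ne _ _ _ _ _ (by tauto)⟩

/-- A Rota–Baxter operator of weight zero: an `F`-linear map `R` with
`R(x)R(y) = R(R(x)y + xR(y))` for all `x, y`. -/
def IsRotaBaxterW0 {F : Type*} [Field F] {A : Type*} [Ring A] [Algebra F A]
    (R : A →ₗ[F] A) : Prop :=
  ∀ x y : A, R x * R y = R (R x * y + x * R y)

section Aux

variable {R : Type*} [Ring R]

lemma expand_uv (e f : R) (he : e*e = e) (hf : f*f = f) :
    (1 - e - f + 2*(e*f)) * (1 - e - f + 2*(f*e)) = 1 - (e-f)*(e-f) := by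
  have he' : ∀ x : R, e*(e*x) = e*x := fun x => by rw [← mul_assoc, he]
  have hf' : ∀ x : R, f*(f*x) = f*x := fun x => by rw [← mul_assoc, hf]
  simp only [mul_sub, sub_mul, mul_add, add_mul, one_mul, mul_one, mul_assoc, he, hf, he', hf',
    two_mul]
  abel

lemma eu_eq (e f : R) (he : e*e = e) : e * (1 - e - f + 2*(e*f)) = e*f := by
  have he' : ∀ x : R, e*(e*x) = e*x := fun x => by rw [← mul_assoc, he]
  simp only [mul_sub, sub_mul, mul_add, add_mul, one_mul, mul_one, mul_assoc, he, he', two_mul]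
  abel

lemma uf_eq (e f : R) (hf : f*f = f) : (1 - e - f + 2*(e*f)) * f = e*f := by
  have hf' : ∀ x : R, f*(f*x) = f*x := fun x => by rw [← mul_assoc, hf]
  simp only [mul_sub, sub_mul, mul_add, add_mul, one_mul, mul_one, mul_assoc, hf, hf', two_mul]
  abel

lemma one_sub_sq_mul (n : R) (h3 : n*n*n = 0) : (1 - n*n) * (1 + n*n) = 1 := by
  have h4 : (n*n)*(n*n) = 0 := by
    rw [show (n*n)*(n*n) = (n*n*n)*n by noncomm_ring, h3, zero_mul]
  have : (1 - n*n) * (1 + n*n) = 1 - (n*n)*(n*n) := by noncomm_ring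
  rw [this, h4, sub_zero]

lemma sq_mul_one_sub (n : R) (h3 : n*n*n = 0) : (1 + n*n) * (1 - n*n) = 1 := by
  have h4 : (n*n)*(n*n) = 0 := by
    rw [show (n*n)*(n*n) = (n*n*n)*n by noncomm_ring, h3, zero_mul]
  have : (1 + n*n) * (1 - n*n) = 1 - (n*n)*(n*n) := by noncomm_ring
  rw [this, h4, sub_zero]

end Aux

/-- Conjugation by a unit as an algebra equivalence. -/
def conjAE {F A : Type*} [CommSemiring F] [Ring A] [Algebra F A] (u : Aˣ) : A ≃ₐ[F] A where
  toFun x := ↑u⁻¹ * x * ↑u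
  invFun x := ↑u * x * ↑u⁻¹
  left_inv x := by simp [mul_assoc]
  right_inv x := by simp [mul_assoc]
  map_mul' x y := by
    have h : (x * (↑u * ↑u⁻¹) * y : A) = x * y := by simp
    calc (↑u⁻¹ * (x*y) * ↑u : A) = ↑u⁻¹ * (x * (↑u * ↑u⁻¹) * y) * ↑u := by rw [h]
    _ = (↑u⁻¹ * x * ↑u) * (↑u⁻¹ * y * ↑u) := by noncomm_ring
  map_add' x y := by noncomm_ring
  commutes' r := by
    show ↑u⁻¹ * algebraMap F A r * ↑u = algebraMap F A r
    rw [mul_assoc, Algebra.commutes r (↑u : A), ← mul_assoc]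
    simp

section Tau
variable {F : Type*} [Field F]

/-- The antitranspose (flip along the antidiagonal) on `UT3 F`. -/
def tau (X : UT3 F) : UT3 F :=
  ⟨Matrix.of fun i j => (X : Matrix (Fin 3) (Fin 3) F) j.rev i.rev, by
    intro i j hij
    exact X.2 _ _ (Fin.rev_lt_rev.mpr hij)⟩

lemma tau_coe (X : UT3 F) (i j : Fin 3) :
    (tau X : Matrix (Fin 3) (Fin 3) F) i j = (X : Matrix (Fin 3) (Fin 3) F) j.rev i.rev := rfl

lemma tau_tau (X : UT3 F) : tau (tau X) = X := by
  apply Subtype.ext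
  ext i j
  simp [tau_coe, Fin.rev_rev]

lemma tau_add (X Y : UT3 F) : tau (X + Y) = tau X + tau Y := by
  apply Subtype.ext
  ext i j
  simp [tau_coe]

lemma tau_smul (c : F) (X : UT3 F) : tau (c • X) = c • tau X := by
  apply Subtype.ext
  ext i j
  simp [tau_coe]

lemma rev0 : (Fin.rev 0 : Fin 3) = 2 := by decide
lemma rev1 : (Fin.rev 1 : Fin 3) = 1 := by decide
lemma rev2 : (Fin.rev 2 : Fin 3) = 0 := by decide

lemma tau_mul (X Y : UT3 F) : tau (X * Y) = tau Y * tau X := by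
  apply Subtype.ext
  ext i j
  show ((X : Matrix (Fin 3) (Fin 3) F) * (Y : Matrix (Fin 3) (Fin 3) F)) j.rev i.rev
      = ((tau Y : Matrix (Fin 3) (Fin 3) F) * (tau X : Matrix (Fin 3) (Fin 3) F)) i j
  simp only [Matrix.mul_apply, Fin.sum_univ_three, tau_coe, rev0, rev1, rev2]
  ring

end Tau

/-- **Lemma 5(b).** Every rank-two idempotent of `U₃(F)` is mapped to `e₁₁ + e₂₂` or
`e₁₁ + e₃₃` by some automorphism or antiautomorphism of `U₃(F)`. -/
theorem idem_rank_two_conj (F : Type*) [Field F] [CharZero F]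
    (A : UT3 F) (hidem : A * A = A)
    (hrank : (A : Matrix (Fin 3) (Fin 3) F).rank = 2) :
    ∃ φ : UT3 F → UT3 F,
      ((∃ ψ : UT3 F ≃ₐ[F] UT3 F, φ = ⇑ψ) ∨
        (Function.Bijective φ ∧
          (∀ X Y : UT3 F, φ (X + Y) = φ X + φ Y) ∧
          (∀ (c : F) (X : UT3 F), φ (c • X) = c • φ X) ∧
          (∀ X Y : UT3 F, φ (X * Y) = φ Y * φ X))) ∧
      (φ A = eU 0 0 (by decide) + eU 1 1 (by decide) ∨
        φ A = eU 0 0 (by decide) + eU 2 2 (by decide)) := by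
  classical
  have ha10 : (A : Matrix (Fin 3) (Fin 3) F) 1 0 = 0 := A.2 1 0 (by decide)
  have ha20 : (A : Matrix (Fin 3) (Fin 3) F) 2 0 = 0 := A.2 2 0 (by decide)
  have ha21 : (A : Matrix (Fin 3) (Fin 3) F) 2 1 = 0 := A.2 2 1 (by decide)
  have hA2 : (A : Matrix (Fin 3) (Fin 3) F) * A = A := by
    exact_mod_cast congrArg Subtype.val hidem
  set d : Fin 3 → F := fun i => (A : Matrix (Fin 3) (Fin 3) F) i i with hdd
  have hd : ∀ i, d i * d i = d i := by
    intro i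
    have h := congrFun (congrFun hA2 i) i
    fin_cases i <;>
      simpa [Matrix.mul_apply, Fin.sum_univ_three, ha10, ha20, ha21, hdd] using h
  have hd01 : ∀ i, d i = 0 ∨ d i = 1 := by
    intro i
    have h : d i * (d i - 1) = 0 := by linear_combination hd i
    rcases mul_eq_zero.mp h with h' | h'
    · exact Or.inl h'
    · exact Or.inr (sub_eq_zero.mp h')
  have hDmem : Matrix.diagonal d ∈ UT3 F := by
    intro i j hij
    exact Matrix.diagonal_apply_ne d (ne_of_gt hij)
  obtain ⟨fD, hfDco⟩ : ∃ fD : UT3 F, (fD : Matrix (Fin 3) (Fin 3) F) = Matrix.diagonal d :=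
    ⟨⟨Matrix.diagonal d, hDmem⟩, rfl⟩
  have hfD : fD * fD = fD := by
    apply Subtype.ext
    show (fD : Matrix (Fin 3) (Fin 3) F) * fD = fD
    rw [hfDco, Matrix.diagonal_mul_diagonal]
    exact congrArg _ (funext hd)
  set n : UT3 F := A - fD with hndef
  have hn_le : ∀ i j : Fin 3, j ≤ i → (n : Matrix (Fin 3) (Fin 3) F) i j = 0 := by
    intro i j h
    have hco : (n : Matrix (Fin 3) (Fin 3) F) i j
        = (A : Matrix (Fin 3) (Fin 3) F) i j - Matrix.diagonal d i j := by
      rw [hndef]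
      show (A : Matrix (Fin 3) (Fin 3) F) i j - (fD : Matrix (Fin 3) (Fin 3) F) i j = _
      rw [hfDco]
    rcases lt_or_eq_of_le h with h' | h'
    · rw [hco, A.2 i j h', Matrix.diagonal_apply_ne d (ne_of_gt h'), sub_zero]
    · subst h'
      rw [hco, Matrix.diagonal_apply_eq]
      exact sub_self _
  have h00 := hn_le 0 0 (le_refl _)
  have h10 := hn_le 1 0 (by decide)
  have h11 := hn_le 1 1 (le_refl _)
  have h20 := hn_le 2 0 (by decide)
  have h21 := hn_le 2 1 (by decide)
  have h22 := hn_le 2 2 (le_refl _)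
  have hn3m : (n : Matrix (Fin 3) (Fin 3) F) * n * n = 0 := by
    ext i j
    fin_cases i <;> fin_cases j <;>
      simp [Matrix.mul_apply, Fin.sum_univ_three, h00, h10, h11, h20, h21, h22]
  have hn3 : n * n * n = 0 := by
    apply Subtype.ext
    exact_mod_cast hn3m
  set u : UT3 F := 1 - A - fD + 2*(A*fD) with hu
  set v : UT3 F := 1 - A - fD + 2*(fD*A) with hv
  have huv : u * v = 1 - n*n := by
    rw [hu, hv, hndef]
    exact expand_uv A fD hidem hfD
  have hvu : v * u = 1 - n*n := by
    have h := expand_uv fD A hfD hidem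
    have e1 : (1 : UT3 F) - fD - A + 2*(fD*A) = v := by rw [hv]; noncomm_ring
    have e2 : (1 : UT3 F) - fD - A + 2*(A*fD) = u := by rw [hu]; noncomm_ring
    have e3 : ((fD : UT3 F) - A)*(fD - A) = n*n := by
      rw [hndef, show fD - A = -(A - fD) from (neg_sub _ _).symm]
      exact neg_mul_neg (A - fD) (A - fD)
    rw [e1, e2, e3] at h
    exact h
  set w : UT3 F := v * (1 + n*n) with hw
  have huw : u * w = 1 := by
    rw [hw, ← mul_assoc, huv, one_sub_sq_mul _ hn3]
  have hwu : w * u = 1 := by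
    have hw'u : ((1 + n*n) * v) * u = 1 := by
      rw [mul_assoc, hvu, sq_mul_one_sub _ hn3]
    have hww : w = (1 + n*n) * v := by
      calc w = (((1 + n*n) * v) * u) * w := by rw [hw'u, one_mul]
      _ = ((1 + n*n) * v) * (u * w) := by rw [mul_assoc]
      _ = (1 + n*n) * v := by rw [huw, mul_one]
    rw [hww, hw'u]
  set U : (UT3 F)ˣ := ⟨u, w, huw, hwu⟩ with hU
  have hAu : A * u = u * fD := by
    rw [hu, eu_eq A fD hidem, uf_eq A fD hfD]
  have hconjA : conjAE (F := F) U A = fD := by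
    show ↑U⁻¹ * A * ↑U = fD
    have hUinv : (↑U⁻¹ : UT3 F) = w := rfl
    have hUco : (↑U : UT3 F) = u := rfl
    rw [hUinv, hUco, mul_assoc, hAu, ← mul_assoc, hwu, one_mul]
  -- rank transfer
  have hAdecomp : A = u * fD * w := by
    calc A = A * (u*w) := by rw [huw, mul_one]
    _ = (A*u)*w := by rw [mul_assoc]
    _ = u*fD*w := by rw [hAu]
  have hfDdecomp : fD = w * A * u := by
    calc fD = (w*u)*fD := by rw [hwu, one_mul]
    _ = w*(u*fD) := by rw [mul_assoc]
    _ = w*(A*u) := by rw [hAu]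
    _ = w*A*u := (mul_assoc w A u).symm
  have hr1 : (fD : Matrix (Fin 3) (Fin 3) F).rank ≤ (A : Matrix (Fin 3) (Fin 3) F).rank := by
    have hco : (fD : Matrix (Fin 3) (Fin 3) F)
        = (w : Matrix (Fin 3) (Fin 3) F) * ((A : Matrix (Fin 3) (Fin 3) F) * u) := by
      rw [hfDdecomp, MulMemClass.coe_mul, MulMemClass.coe_mul, mul_assoc]
    rw [hco]
    exact le_trans (Matrix.rank_mul_le_right _ _) (Matrix.rank_mul_le_left _ _)
  have hr2 : (A : Matrix (Fin 3) (Fin 3) F).rank ≤ (fD : Matrix (Fin 3) (Fin 3) F).rank := by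
    have hco : (A : Matrix (Fin 3) (Fin 3) F)
        = (u : Matrix (Fin 3) (Fin 3) F) * ((fD : Matrix (Fin 3) (Fin 3) F) * w) := by
      rw [hAdecomp, MulMemClass.coe_mul, MulMemClass.coe_mul, mul_assoc]
    rw [hco]
    exact le_trans (Matrix.rank_mul_le_right _ _) (Matrix.rank_mul_le_left _ _)
  have hfrank : (Matrix.diagonal d).rank = 2 := by
    rw [← hfDco]; omega
  rw [Matrix.rank_diagonal] at hfrank
  have cardeq : ∀ (q : Fin 3 → Prop) (_ : DecidablePred q), (∀ i, (d i ≠ 0) ↔ q i) →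
      Fintype.card {i : Fin 3 // q i} = 2 := by
    intro q instq hq
    rw [← hfrank]
    exact (Fintype.card_congr (Equiv.subtypeEquivRight fun i => (hq i).symm)).trans (by congr!)
  clear_value n u v w U
  clear hU hw hu hv hndef huv hvu huw hwu hAu hn_le h00 h10 h11 h20 h21 h22 hn3m hn3 hA2
  clear ha10 ha20 ha21 hAdecomp hfDdecomp hDmem hd hfD hr1 hr2 hfrank hrank hidem
  rcases hd01 0 with h0 | h0 <;> rcases hd01 1 with h1 | h1 <;> rcases hd01 2 with h2 | h2
  -- (0,0,0)
  · exfalso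
    have := cardeq (fun _ => False) inferInstance (by intro i; fin_cases i <;> simp [h0, h1, h2])
    simp at this
  -- (0,0,1)
  · exfalso
    have := cardeq (fun i => i = 2) inferInstance (by intro i; fin_cases i <;> simp [h0, h1, h2])
    rw [Fintype.card_subtype_eq] at this
    omega
  -- (0,1,0)
  · exfalso
    have := cardeq (fun i => i = 1) inferInstance (by intro i; fin_cases i <;> simp [h0, h1, h2])
    rw [Fintype.card_subtype_eq] at this
    omega
  -- (0,1,1) : antiautomorphism case
  · refine ⟨fun X => tau (conjAE (F := F) U X), Or.inr ⟨?_, ?_, ?_, ?_⟩, Or.inl ?_⟩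
    · exact (Function.Involutive.bijective tau_tau).comp (conjAE (F := F) U).bijective
    · intro X Y
      show tau (conjAE (F := F) U (X + Y)) = tau (conjAE (F := F) U X) + tau (conjAE (F := F) U Y)
      rw [map_add, tau_add]
    · intro c X
      show tau (conjAE (F := F) U (c • X)) = c • tau (conjAE (F := F) U X)
      rw [map_smul, tau_smul]
    · intro X Y
      show tau (conjAE (F := F) U (X * Y)) = tau (conjAE (F := F) U Y) * tau (conjAE (F := F) U X)
      rw [map_mul, tau_mul]
    · show tau (conjAE (F := F) U A) = _
      rw [hconjA]
      apply Subtype.ext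
      ext i j
      rw [tau_coe, hfDco]
      fin_cases i <;> fin_cases j <;>
        simp [eU, Matrix.single, Matrix.diagonal_apply, Fin.rev, h0, h1, h2]
  -- (1,0,0)
  · exfalso
    have := cardeq (fun i => i = 0) inferInstance (by intro i; fin_cases i <;> simp [h0, h1, h2])
    rw [Fintype.card_subtype_eq] at this
    omega
  -- (1,0,1) : automorphism, target e11 + e33
  · refine ⟨⇑(conjAE (F := F) U), Or.inl ⟨conjAE (F := F) U, rfl⟩, Or.inr ?_⟩
    rw [hconjA]
    apply Subtype.ext
    rw [hfDco]
    ext i j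
    fin_cases i <;> fin_cases j <;>
      simp [eU, Matrix.single, Matrix.diagonal_apply, h0, h1, h2]
  -- (1,1,0) : automorphism, target e11 + e22
  · refine ⟨⇑(conjAE (F := F) U), Or.inl ⟨conjAE (F := F) U, rfl⟩, Or.inl ?_⟩
    rw [hconjA]
    apply Subtype.ext
    rw [hfDco]
    ext i j
    fin_cases i <;> fin_cases j <;>
      simp [eU, Matrix.single, Matrix.diagonal_apply, h0, h1, h2]
  -- (1,1,1)
  · exfalso
    have := cardeq (fun _ => True) inferInstance (by intro i; fin_cases i <;> simp [h0, h1, h2])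
    rw [Fintype.card_congr (Equiv.subtypeUnivEquiv fun _ => trivial), Fintype.card_fin] at this
    omega
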